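/- Let q be an odd prime power and let H_6 be the group of order 16 with presentation ⟨a, b, c | a^4 = b^4 = c^2 = 1, ba = a^3 b, ca = ac, cb = bc, a^2 = b^2⟩ (isomorphic to Q_8 × ℤ_2). Then 𝔽_qH_6 ≅ 𝔽_q^{(8)} ⊕ M_2(𝔽_q)^{(2)}. -/

import Mathlib

/-- The relators of the presentation
`H₆ = ⟨a, b, c | a⁴ = b⁴ = c² = 1, ba = a³b, ca = ac, cb = bc, a² = b²⟩` of a group of
order 16 (isomorphic to `Q₈ × ℤ₂`). -/
def H6Rels : Set (FreeGroup (Fin 3)) :=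
  { (FreeGroup.of 0) ^ 4, (FreeGroup.of 1) ^ 4, (FreeGroup.of 2) ^ 2,
    (FreeGroup.of 1) * (FreeGroup.of 0) * ((FreeGroup.of 0) ^ 3 * (FreeGroup.of 1))⁻¹,
    (FreeGroup.of 2) * (FreeGroup.of 0) * ((FreeGroup.of 0) * (FreeGroup.of 2))⁻¹,
    (FreeGroup.of 2) * (FreeGroup.of 1) * ((FreeGroup.of 1) * (FreeGroup.of 2))⁻¹,
    (FreeGroup.of 0) ^ 2 * ((FreeGroup.of 1) ^ 2)⁻¹ }

namespace H6

abbrev G := PresentedGroup H6Rels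

noncomputable def a : G := PresentedGroup.of 0
noncomputable def b : G := PresentedGroup.of 1
noncomputable def c : G := PresentedGroup.of 2

lemma relmk {r : FreeGroup (Fin 3)} (hr : r ∈ H6Rels) : PresentedGroup.mk H6Rels r = 1 :=
  (QuotientGroup.eq_one_iff _).mpr (Subgroup.subset_normalClosure hr)

lemma ha4 : a ^ 4 = 1 := by
  have h := relmk (show (FreeGroup.of 0 : FreeGroup (Fin 3)) ^ 4 ∈ H6Rels by simp [H6Rels])
  simpa [a, PresentedGroup.of] using h

lemma hb4 : b ^ 4 = 1 := by
  have h := relmk (show (FreeGroup.of 1 : FreeGroup (Fin 3)) ^ 4 ∈ H6Rels by simp [H6Rels])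
  simpa [b, PresentedGroup.of] using h

lemma hc2 : c ^ 2 = 1 := by
  have h := relmk (show (FreeGroup.of 2 : FreeGroup (Fin 3)) ^ 2 ∈ H6Rels by simp [H6Rels])
  simpa [c, PresentedGroup.of] using h

lemma hba : b * a = a ^ 3 * b := by
  have h := relmk (show (FreeGroup.of 1) * (FreeGroup.of 0) *
      ((FreeGroup.of 0 : FreeGroup (Fin 3)) ^ 3 * (FreeGroup.of 1))⁻¹ ∈ H6Rels by simp [H6Rels])
  simp only [map_mul, map_inv, map_pow] at h
  rw [mul_inv_eq_one] at h
  simpa [a, b, PresentedGroup.of] using h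

lemma hca : c * a = a * c := by
  have h := relmk (show (FreeGroup.of 2) * (FreeGroup.of 0) *
      ((FreeGroup.of 0 : FreeGroup (Fin 3)) * (FreeGroup.of 2))⁻¹ ∈ H6Rels by simp [H6Rels])
  simp only [map_mul, map_inv] at h
  rw [mul_inv_eq_one] at h
  simpa [a, c, PresentedGroup.of] using h

lemma hcb : c * b = b * c := by
  have h := relmk (show (FreeGroup.of 2) * (FreeGroup.of 1) *
      ((FreeGroup.of 1 : FreeGroup (Fin 3)) * (FreeGroup.of 2))⁻¹ ∈ H6Rels by simp [H6Rels])
  simp only [map_mul, map_inv] at h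
  rw [mul_inv_eq_one] at h
  simpa [b, c, PresentedGroup.of] using h

lemma hab2 : a ^ 2 = b ^ 2 := by
  have h := relmk (show (FreeGroup.of 0 : FreeGroup (Fin 3)) ^ 2 *
      ((FreeGroup.of 1 : FreeGroup (Fin 3)) ^ 2)⁻¹ ∈ H6Rels by simp [H6Rels])
  simp only [map_mul, map_inv, map_pow] at h
  rw [mul_inv_eq_one] at h
  simpa [a, b, PresentedGroup.of] using h

lemma pow_mod {M : Type*} [Monoid M] {g : M} {n : ℕ} (h : g ^ n = 1) (k : ℕ) :
    g ^ k = g ^ (k % n) := by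
  conv_lhs => rw [← Nat.mod_add_div k n]
  rw [pow_add, pow_mul, h, one_pow, mul_one]

noncomputable def nf (t : Fin 4 × Fin 2 × Fin 2) : G :=
  a ^ (t.1 : ℕ) * b ^ (t.2.1 : ℕ) * c ^ (t.2.2 : ℕ)

lemma key (i j k : ℕ) : ∃ t, nf t = a ^ i * b ^ j * c ^ k := by
  obtain ⟨e, j', hj⟩ : ∃ (e : ℕ) (j' : Fin 2), b ^ j = a ^ e * b ^ (j' : ℕ) := by
    rw [pow_mod hb4 j]
    have h4 : j % 4 < 4 := Nat.mod_lt _ (by norm_num)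
    interval_cases h : j % 4
    · exact ⟨0, 0, by simp⟩
    · exact ⟨0, 1, by simp⟩
    · exact ⟨2, 0, by simp [hab2]⟩
    · refine ⟨2, 1, ?_⟩
      have h3 : b ^ 3 = b ^ 2 * b := by rw [← pow_succ]
      rw [h3, ← hab2, Fin.val_one, pow_one]
  refine ⟨(⟨(i + e) % 4, Nat.mod_lt _ (by norm_num)⟩, j', ⟨k % 2, Nat.mod_lt _ (by norm_num)⟩), ?_⟩
  simp only [nf]
  rw [← pow_mod ha4, ← pow_mod hc2, hj, pow_add]
  simp only [mul_assoc]

lemma comm_c_pow (g : G) (h : c * g = g * c) (k : ℕ) : c ^ k * g = g * c ^ k :=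
  ((Commute.pow_left (h : Commute c g) k)).eq

lemma mul_a (t : Fin 4 × Fin 2 × Fin 2) : ∃ t', nf t' = nf t * a := by
  obtain ⟨p, q, r⟩ := t
  have hc : c ^ (r : ℕ) * a = a * c ^ (r : ℕ) := comm_c_pow a hca _
  fin_cases q
  · obtain ⟨t', ht'⟩ := key ((p : ℕ) + 1) 0 (r : ℕ)
    refine ⟨t', ?_⟩
    rw [ht']
    show a ^ ((p:ℕ)+1) * b ^ (0:ℕ) * c ^ (r:ℕ) = a ^ (p:ℕ) * b ^ ((0 : Fin 2):ℕ) * c ^ (r:ℕ) * a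
    simp only [pow_zero, mul_one, Fin.val_zero, pow_succ, mul_assoc, hc]
  · obtain ⟨t', ht'⟩ := key ((p : ℕ) + 3) 1 (r : ℕ)
    refine ⟨t', ?_⟩
    rw [ht']
    show a ^ ((p:ℕ)+3) * b ^ (1:ℕ) * c ^ (r:ℕ) = a ^ (p:ℕ) * b ^ ((1 : Fin 2):ℕ) * c ^ (r:ℕ) * a
    simp only [Fin.val_one, pow_one]
    rw [mul_assoc (a ^ (p:ℕ) * b), hc, ← mul_assoc, mul_assoc (a ^ (p:ℕ)), hba, pow_add]
    simp only [mul_assoc]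

lemma mul_b (t : Fin 4 × Fin 2 × Fin 2) : ∃ t', nf t' = nf t * b := by
  obtain ⟨p, q, r⟩ := t
  have hc : c ^ (r : ℕ) * b = b * c ^ (r : ℕ) := comm_c_pow b hcb _
  obtain ⟨t', ht'⟩ := key (p : ℕ) ((q : ℕ) + 1) (r : ℕ)
  refine ⟨t', ?_⟩
  rw [ht']
  show a ^ (p:ℕ) * b ^ ((q:ℕ)+1) * c ^ (r:ℕ) = a ^ (p:ℕ) * b ^ (q:ℕ) * c ^ (r:ℕ) * b
  simp only [pow_succ, mul_assoc, hc]

lemma mul_c (t : Fin 4 × Fin 2 × Fin 2) : ∃ t', nf t' = nf t * c := by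
  obtain ⟨p, q, r⟩ := t
  obtain ⟨t', ht'⟩ := key (p : ℕ) (q : ℕ) ((r : ℕ) + 1)
  refine ⟨t', ?_⟩
  rw [ht']
  show a ^ (p:ℕ) * b ^ (q:ℕ) * c ^ ((r:ℕ)+1) = a ^ (p:ℕ) * b ^ (q:ℕ) * c ^ (r:ℕ) * c
  simp only [pow_succ, mul_assoc]

lemma mul_a_inv (t : Fin 4 × Fin 2 × Fin 2) : ∃ t', nf t' = nf t * a⁻¹ := by
  have hinv : a⁻¹ = a * a * a := inv_eq_of_mul_eq_one_right (by rw [← ha4, pow_succ, pow_succ, pow_succ, pow_one]; simp only [mul_assoc])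
  rw [hinv]
  simp only [← mul_assoc]
  obtain ⟨t1, h1⟩ := mul_a t; rw [← h1]
  obtain ⟨t2, h2⟩ := mul_a t1; rw [← h2]
  exact mul_a t2

lemma mul_b_inv (t : Fin 4 × Fin 2 × Fin 2) : ∃ t', nf t' = nf t * b⁻¹ := by
  have hinv : b⁻¹ = b * b * b := inv_eq_of_mul_eq_one_right (by rw [← hb4, pow_succ, pow_succ, pow_succ, pow_one]; simp only [mul_assoc])
  rw [hinv]
  simp only [← mul_assoc]
  obtain ⟨t1, h1⟩ := mul_b t; rw [← h1]
  obtain ⟨t2, h2⟩ := mul_b t1; rw [← h2]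
  exact mul_b t2

lemma mul_c_inv (t : Fin 4 × Fin 2 × Fin 2) : ∃ t', nf t' = nf t * c⁻¹ := by
  have hinv : c⁻¹ = c := inv_eq_of_mul_eq_one_right (by rw [← hc2, pow_two])
  rw [hinv]
  exact mul_c t

lemma nf_surj : Function.Surjective nf := by
  intro g
  have hg : g ∈ Subgroup.closure (Set.range (PresentedGroup.of : Fin 3 → G)) := by
    rw [PresentedGroup.closure_range_of]; trivial
  induction hg using Subgroup.closure_induction_right with
  | one => exact ⟨(0, 0, 0), by simp [nf]⟩
  | mul_right x hx y hy ih =>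
      obtain ⟨i, rfl⟩ := hy
      obtain ⟨t, rfl⟩ := ih
      fin_cases i
      · exact mul_a t
      · exact mul_b t
      · exact mul_c t
  | mul_inv_cancel x hx y hy ih =>
      obtain ⟨i, rfl⟩ := hy
      obtain ⟨t, rfl⟩ := ih
      fin_cases i
      · exact mul_a_inv t
      · exact mul_b_inv t
      · exact mul_c_inv t

lemma finiteG : Finite G := Finite.of_surjective nf nf_surj

lemma cardG_le : Nat.card G ≤ 16 := by
  have h := Nat.card_le_card_of_surjective nf nf_surj
  simpa using h

section Rep

variable {F : Type*} [Field F]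

def chr0 : Fin 8 → F := ![1, -1, 1, -1, 1, -1, 1, -1]
def chr1 : Fin 8 → F := ![1, 1, -1, -1, 1, 1, -1, -1]
def chr2 : Fin 8 → F := ![1, 1, 1, 1, -1, -1, -1, -1]

abbrev Rg (F : Type*) [Field F] :=
  (Fin 8 → F) × (Fin 2 → Matrix (Fin 2) (Fin 2) F)

def MA (x y : F) : Matrix (Fin 2) (Fin 2) F := !![x, y; y, -x]
def MB : Matrix (Fin 2) (Fin 2) F := !![0, 1; -1, 0]

def va (x y : F) : Rg F := (chr0, fun _ => MA x y)
def vb : Rg F := (chr1, fun _ => MB)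
def vc : Rg F := (chr2, fun j => if j = 0 then 1 else -1)

variable {x y : F}

lemma prodEq {p q : Rg F} (h1 : ∀ i, p.1 i = q.1 i) (h2 : ∀ j, p.2 j = q.2 j) : p = q :=
  Prod.ext_iff.mpr ⟨funext h1, funext h2⟩

lemma MA_sq (hxy : x ^ 2 + y ^ 2 = -1) : MA x y * MA x y = -1 := by
  ext i k
  fin_cases i <;> fin_cases k <;>
    simp [MA, Matrix.mul_apply, Fin.sum_univ_two, Matrix.one_apply] <;>
    first
      | (ring1)
      | (linear_combination hxy)
      | (linear_combination -hxy)
      | (linear_combination 2 * hxy)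
      | (linear_combination (-2 : F) * hxy)

lemma MB_sq : (MB : Matrix (Fin 2) (Fin 2) F) * MB = -1 := by
  ext i k
  fin_cases i <;> fin_cases k <;>
    simp [MB, Matrix.mul_apply, Fin.sum_univ_two, Matrix.one_apply]

lemma MBA : (MB : Matrix (Fin 2) (Fin 2) F) * MA x y = -(MA x y * MB) := by
  ext i k
  fin_cases i <;> fin_cases k <;>
    simp [MA, MB, Matrix.mul_apply, Fin.sum_univ_two]

lemma va_sq (hxy : x ^ 2 + y ^ 2 = -1) :
    va x y * va x y = ((1 : Fin 8 → F), fun _ => (-1 : Matrix (Fin 2) (Fin 2) F)) := by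
  refine prodEq (fun i => ?_) (fun j => ?_)
  · simp only [va, Prod.fst_mul, Pi.mul_apply, Pi.one_apply]
    fin_cases i <;> norm_num [chr0]
  · simp only [va, Prod.snd_mul, Pi.mul_apply]
    exact MA_sq hxy

lemma vb_sq : (vb : Rg F) * vb = ((1 : Fin 8 → F), fun _ => (-1 : Matrix (Fin 2) (Fin 2) F)) := by
  refine prodEq (fun i => ?_) (fun j => ?_)
  · simp only [vb, Prod.fst_mul, Pi.mul_apply, Pi.one_apply]
    fin_cases i <;> norm_num [chr1]
  · simp only [vb, Prod.snd_mul, Pi.mul_apply]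
    exact MB_sq

lemma vc_sq : (vc : Rg F) * vc = 1 := by
  refine prodEq (fun i => ?_) (fun j => ?_)
  · simp only [vc, Prod.fst_mul, Pi.mul_apply, Prod.fst_one, Pi.one_apply]
    fin_cases i <;> norm_num [chr2]
  · simp only [vc, Prod.snd_mul, Pi.mul_apply, Prod.snd_one, Pi.one_apply]
    split_ifs <;> simp

lemma eps_sq : (((1 : Fin 8 → F), fun _ => (-1 : Matrix (Fin 2) (Fin 2) F)) : Rg F) *
    ((1 : Fin 8 → F), fun _ => (-1 : Matrix (Fin 2) (Fin 2) F)) = 1 := by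
  refine prodEq (fun i => ?_) (fun j => ?_) <;>
    simp [Prod.fst_mul, Prod.snd_mul]

lemma pow4_eq {M : Type*} [Monoid M] (v : M) : v ^ 4 = (v * v) * (v * v) := by
  rw [pow_succ, pow_succ, pow_succ, pow_one, mul_assoc]

lemma pow3_eq {M : Type*} [Monoid M] (v : M) : v ^ 3 = (v * v) * v := by
  rw [pow_succ, pow_succ, pow_one]

lemma va4 (hxy : x ^ 2 + y ^ 2 = -1) : va x y ^ 4 = 1 := by
  rw [pow4_eq, va_sq hxy, eps_sq]

lemma vb4 : (vb : Rg F) ^ 4 = 1 := by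
  rw [pow4_eq, vb_sq, eps_sq]

lemma vc4 : (vc : Rg F) ^ 4 = 1 := by
  rw [pow4_eq, vc_sq, one_mul]

lemma va_cube (hxy : x ^ 2 + y ^ 2 = -1) :
    va x y ^ 3 = ((chr0 : Fin 8 → F), fun _ => -(MA x y)) := by
  rw [pow3_eq, va_sq hxy]
  refine prodEq (fun i => ?_) (fun j => ?_) <;>
    simp [va, Prod.fst_mul, Prod.snd_mul]

lemma relBA (hxy : x ^ 2 + y ^ 2 = -1) : vb * va x y = va x y ^ 3 * vb := by
  rw [va_cube hxy]
  refine prodEq (fun i => ?_) (fun j => ?_)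
  · simp only [va, vb, Prod.fst_mul, Pi.mul_apply]
    ring
  · simp only [va, vb, Prod.snd_mul, Pi.mul_apply]
    rw [MBA, neg_mul]

lemma relCA : vc * va x y = va x y * vc := by
  refine prodEq (fun i => ?_) (fun j => ?_)
  · simp only [va, vc, Prod.fst_mul, Pi.mul_apply]
    ring
  · simp only [va, vc, Prod.snd_mul, Pi.mul_apply]
    split_ifs <;> simp

lemma relCB : (vc : Rg F) * vb = vb * vc := by
  refine prodEq (fun i => ?_) (fun j => ?_)
  · simp only [vb, vc, Prod.fst_mul, Pi.mul_apply]
    ring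
  · simp only [vb, vc, Prod.snd_mul, Pi.mul_apply]
    split_ifs <;> simp

lemma relAB2 (hxy : x ^ 2 + y ^ 2 = -1) : va x y ^ 2 = (vb : Rg F) ^ 2 := by
  rw [pow_two, pow_two, va_sq hxy, vb_sq]

/-- a unit from an element of multiplicative order dividing 4 -/
def unitOf {M : Type*} [Monoid M] {v : M} (h : v ^ 4 = 1) : Mˣ :=
  ⟨v, v ^ 3, (pow_succ' v 3).symm.trans h, (pow_succ v 3).symm.trans h⟩

@[simp] lemma unitOf_val {M : Type*} [Monoid M] {v : M} (h : v ^ 4 = 1) :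
    (unitOf h : M) = v := rfl

variable (x y) in
noncomputable def f3 (hxy : x ^ 2 + y ^ 2 = -1) : Fin 3 → (Rg F)ˣ :=
  ![unitOf (va4 hxy), unitOf (vb4 (F := F)), unitOf (vc4 (F := F))]

lemma hrels (hxy : x ^ 2 + y ^ 2 = -1) :
    ∀ r ∈ H6Rels, FreeGroup.lift (f3 x y hxy) r = 1 := by
  intro r hr
  simp only [H6Rels, Set.mem_insert_iff, Set.mem_singleton_iff] at hr
  rcases hr with rfl | rfl | rfl | rfl | rfl | rfl | rfl <;>
    simp only [map_mul, map_pow, map_inv, FreeGroup.lift_apply_of, f3, Matrix.cons_val_zero,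
      Matrix.cons_val_one, Matrix.head_cons, Matrix.cons_val_two, Matrix.tail_cons]
  · rw [Units.ext_iff]; push_cast; exact va4 hxy
  · rw [Units.ext_iff]; push_cast; exact vb4
  · rw [Units.ext_iff]; push_cast
    rw [pow_two]
    exact vc_sq
  · rw [mul_inv_eq_one, Units.ext_iff]; push_cast; exact relBA hxy
  · rw [mul_inv_eq_one, Units.ext_iff]; push_cast; exact relCA
  · rw [mul_inv_eq_one, Units.ext_iff]; push_cast; exact relCB
  · rw [mul_inv_eq_one, Units.ext_iff]; push_cast; exact relAB2 hxy

variable (x y) in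
noncomputable def pihom (hxy : x ^ 2 + y ^ 2 = -1) : G →* Rg F :=
  (Units.coeHom (Rg F)).comp (PresentedGroup.toGroup (hrels hxy))

lemma pihom_a (hxy : x ^ 2 + y ^ 2 = -1) : pihom x y hxy a = va x y := by
  simp [pihom, a, PresentedGroup.toGroup.of, f3]

lemma pihom_b (hxy : x ^ 2 + y ^ 2 = -1) : pihom x y hxy b = vb := by
  simp [pihom, b, PresentedGroup.toGroup.of, f3]

lemma pihom_c (hxy : x ^ 2 + y ^ 2 = -1) : pihom x y hxy c = vc := by
  simp [pihom, c, PresentedGroup.toGroup.of, f3]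

end Rep

section Span

variable {F : Type*} [Field F] {x y : F}

lemma matcomb (hxy : x ^ 2 + y ^ 2 = -1) (T : Matrix (Fin 2) (Fin 2) F) :
    (T 0 0 + T 1 1) • (1 : Matrix (Fin 2) (Fin 2) F)
      + (-(x * (T 0 0 - T 1 1)) - y * (T 0 1 + T 1 0)) • MA x y
      + (T 0 1 - T 1 0) • MB
      + (y * (T 0 0 - T 1 1) - x * (T 0 1 + T 1 0)) • (MA x y * MB) = (2 : F) • T := by
  ext i k
  fin_cases i <;> fin_cases k <;>
    simp [MA, MB, Matrix.mul_apply, Fin.sum_univ_two, Matrix.one_apply] <;>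
    first
      | (ring1)
      | (linear_combination (T 1 1 - T 0 0) * hxy)
      | (linear_combination (T 0 0 - T 1 1) * hxy)
      | (linear_combination (-(T 0 1 + T 1 0)) * hxy)
      | (linear_combination (T 0 1 + T 1 0) * hxy)
      | (linear_combination (-(T 0 1 - T 1 0)) * hxy)
      | (linear_combination (T 0 1 - T 1 0) * hxy)

lemma mem_top (h2 : (2 : F) ≠ 0) (hxy : x ^ 2 + y ^ 2 = -1)
    (S : Subalgebra F (Rg F)) (hA : va x y ∈ S) (hB : vb ∈ S) (hC : vc ∈ S)
    (z : Rg F) : z ∈ S := by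
  have hi2 : (2⁻¹ : F) * 2 = 1 := inv_mul_cancel₀ h2
  have h8 : (8 : F) ≠ 0 := by
    rw [show (8 : F) = 2 * 2 * 2 by norm_num]
    exact mul_ne_zero (mul_ne_zero h2 h2) h2
  have hi8 : (8⁻¹ : F) * 8 = 1 := inv_mul_cancel₀ h8
  -- the matrix-block idempotent
  have hem : ((0, 1) : Rg F) ∈ S := by
    have hmem := S.smul_mem (S.sub_mem S.one_mem (S.mul_mem hA hA)) (2⁻¹ : F)
    have heq : (2⁻¹ : F) • ((1 : Rg F) - va x y * va x y) = ((0, 1) : Rg F) := by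
      rw [va_sq hxy]
      refine prodEq (fun i => ?_) (fun j => ?_)
      · simp
      · show (2⁻¹ : F) • ((1 : Matrix (Fin 2) (Fin 2) F) - (-1)) = 1
        ext a b
        fin_cases a <;> fin_cases b <;>
          simp [Matrix.one_apply] <;>
          linear_combination hi2
    rwa [heq] at hmem
  -- the character-block idempotent
  have hec : ((1, 0) : Rg F) ∈ S := by
    have hmem := S.sub_mem S.one_mem hem
    have heq : (1 : Rg F) - ((0, 1) : Rg F) = ((1, 0) : Rg F) := by
      refine prodEq (fun i => ?_) (fun j => ?_) <;> simp
    rwa [heq] at hmem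
  -- character generators
  have hg0 : ((chr0, 0) : Rg F) ∈ S := by
    have hmem := S.mul_mem hec hA
    have heq : ((1, 0) : Rg F) * va x y = ((chr0, 0) : Rg F) := by
      refine prodEq (fun i => ?_) (fun j => ?_) <;> simp [va]
    rwa [heq] at hmem
  have hg1 : ((chr1, 0) : Rg F) ∈ S := by
    have hmem := S.mul_mem hec hB
    have heq : ((1, 0) : Rg F) * vb = ((chr1, 0) : Rg F) := by
      refine prodEq (fun i => ?_) (fun j => ?_) <;> simp [vb]
    rwa [heq] at hmem
  have hg2 : ((chr2, 0) : Rg F) ∈ S := by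
    have hmem := S.mul_mem hec hC
    have heq : ((1, 0) : Rg F) * vc = ((chr2, 0) : Rg F) := by
      refine prodEq (fun i => ?_) (fun j => ?_) <;> simp [vc]
    rwa [heq] at hmem
  -- the indicator functions of the eight characters
  have hdi : ∀ i : Fin 8, (((fun j => if j = i then (1 : F) else 0), 0) : Rg F) ∈ S := by
    intro i
    have hPmem : ((((1, 0) : Rg F) + (chr0 i : F) • ((chr0, 0) : Rg F)) *
        (((1, 0) : Rg F) + (chr1 i : F) • ((chr1, 0) : Rg F)) *
        (((1, 0) : Rg F) + (chr2 i : F) • ((chr2, 0) : Rg F))) ∈ S :=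
      S.mul_mem (S.mul_mem (S.add_mem hec (S.smul_mem hg0 _))
        (S.add_mem hec (S.smul_mem hg1 _))) (S.add_mem hec (S.smul_mem hg2 _))
    have hPval : ((((1, 0) : Rg F) + (chr0 i : F) • ((chr0, 0) : Rg F)) *
        (((1, 0) : Rg F) + (chr1 i : F) • ((chr1, 0) : Rg F)) *
        (((1, 0) : Rg F) + (chr2 i : F) • ((chr2, 0) : Rg F))) =
        (((fun j => if j = i then (8 : F) else 0), 0) : Rg F) := by
      refine prodEq (fun j => ?_) (fun j => ?_)
      · simp only [Prod.fst_mul, Prod.fst_add, Prod.smul_fst, Pi.mul_apply, Pi.add_apply,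
          Pi.smul_apply, Pi.one_apply, smul_eq_mul]
        fin_cases i <;> fin_cases j <;> norm_num [chr0, chr1, chr2, Fin.ext_iff]
      · simp
    rw [hPval] at hPmem
    have hmem := S.smul_mem hPmem (8⁻¹ : F)
    have heq : (8⁻¹ : F) • (((fun j => if j = i then (8 : F) else 0), 0) : Rg F) =
        (((fun j => if j = i then (1 : F) else 0), 0) : Rg F) := by
      refine prodEq (fun j => ?_) (fun j => ?_)
      · simp only [Prod.smul_fst, Pi.smul_apply, smul_eq_mul]
        split_ifs <;> simp [hi8]
      · simp
    rwa [heq] at hmem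
  -- all vectors in the character block
  have hfun : ∀ f : Fin 8 → F, ((f, 0) : Rg F) ∈ S := by
    intro f
    have hrep : ((f, 0) : Rg F) =
        ∑ i : Fin 8, f i • (((fun j => if j = i then (1 : F) else 0), 0) : Rg F) := by
      refine prodEq (fun j => ?_) (fun j => ?_)
      · simp only [Prod.fst_sum, Prod.smul_fst, Finset.sum_apply, Pi.smul_apply, smul_eq_mul,
          mul_ite, mul_one, mul_zero]
        rw [Finset.sum_ite_eq]
        simp
      · simp [Prod.snd_sum]
    rw [hrep]
    exact S.sum_mem (fun i _ => S.smul_mem (hdi i) _)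
  -- the two matrix-block idempotents
  have hm0 : ((0, fun j => if j = 0 then (1 : Matrix (Fin 2) (Fin 2) F) else 0) : Rg F) ∈ S := by
    have hmem := S.smul_mem (S.add_mem hem (S.mul_mem hem hC)) (2⁻¹ : F)
    have heq : (2⁻¹ : F) • (((0, 1) : Rg F) + ((0, 1) : Rg F) * vc) =
        ((0, fun j => if j = 0 then (1 : Matrix (Fin 2) (Fin 2) F) else 0) : Rg F) := by
      refine prodEq (fun i => ?_) (fun j => ?_)
      · simp [vc]
      · show (2⁻¹ : F) • ((1 : Matrix (Fin 2) (Fin 2) F) +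
          1 * (if j = 0 then 1 else -1)) =
          (if j = 0 then (1 : Matrix (Fin 2) (Fin 2) F) else 0)
        by_cases hj : j = 0
        · rw [if_pos hj, if_pos hj, one_mul]
          ext a b
          fin_cases a <;> fin_cases b <;> simp [Matrix.one_apply] <;> linear_combination hi2
        · rw [if_neg hj, if_neg hj, one_mul]
          simp
    rwa [heq] at hmem
  have hm1 : ((0, fun j => if j = (0 : Fin 2) then 0 else (1 : Matrix (Fin 2) (Fin 2) F)) : Rg F) ∈ S := by
    have hmem := S.smul_mem (S.sub_mem hem (S.mul_mem hem hC)) (2⁻¹ : F)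
    have heq : (2⁻¹ : F) • (((0, 1) : Rg F) - ((0, 1) : Rg F) * vc) =
        ((0, fun j => if j = (0 : Fin 2) then 0 else (1 : Matrix (Fin 2) (Fin 2) F)) : Rg F) := by
      refine prodEq (fun i => ?_) (fun j => ?_)
      · simp [vc]
      · show (2⁻¹ : F) • ((1 : Matrix (Fin 2) (Fin 2) F) -
          1 * (if j = 0 then 1 else -1)) =
          (if j = 0 then 0 else (1 : Matrix (Fin 2) (Fin 2) F))
        by_cases hj : j = 0
        · rw [if_pos hj, if_pos hj, one_mul]
          simp
        · rw [if_neg hj, if_neg hj, one_mul]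
          ext a b
          fin_cases a <;> fin_cases b <;> simp [Matrix.one_apply] <;> linear_combination hi2
    rwa [heq] at hmem
  have hmj : ∀ jj : Fin 2,
      ((0, fun j' => if j' = jj then (1 : Matrix (Fin 2) (Fin 2) F) else 0) : Rg F) ∈ S := by
    intro jj
    by_cases hjj : jj = 0
    · subst hjj
      exact hm0
    · have hjj1 : jj = 1 := by omega
      subst hjj1
      have heq : ((0, fun j' => if j' = (1 : Fin 2) then (1 : Matrix (Fin 2) (Fin 2) F) else 0) : Rg F) =
          ((0, fun j => if j = (0 : Fin 2) then 0 else (1 : Matrix (Fin 2) (Fin 2) F)) : Rg F) := by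
        refine prodEq (fun i => ?_) (fun j => ?_)
        · simp
        · fin_cases j <;> simp
      rw [heq]
      exact hm1
  -- arbitrary matrix atoms
  have hatom : ∀ (jj : Fin 2) (T : Matrix (Fin 2) (Fin 2) F),
      ((0, fun j' => if j' = jj then T else 0) : Rg F) ∈ S := by
    intro jj T
    set mS : Rg F := (0, fun j' => if j' = jj then 1 else 0) with hmS_def
    have hmS : mS ∈ S := hmj jj
    have hmem := S.smul_mem
      (S.add_mem (S.add_mem (S.add_mem
        (S.smul_mem hmS (T 0 0 + T 1 1))
        (S.smul_mem (S.mul_mem hmS hA) (-(x * (T 0 0 - T 1 1)) - y * (T 0 1 + T 1 0))))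
        (S.smul_mem (S.mul_mem hmS hB) (T 0 1 - T 1 0)))
        (S.smul_mem (S.mul_mem hmS (S.mul_mem hA hB)) (y * (T 0 0 - T 1 1) - x * (T 0 1 + T 1 0))))
      (2⁻¹ : F)
    have heq : (2⁻¹ : F) • ((T 0 0 + T 1 1) • mS
        + (-(x * (T 0 0 - T 1 1)) - y * (T 0 1 + T 1 0)) • (mS * va x y)
        + (T 0 1 - T 1 0) • (mS * vb)
        + (y * (T 0 0 - T 1 1) - x * (T 0 1 + T 1 0)) • (mS * (va x y * vb))) =
        ((0, fun j' => if j' = jj then T else 0) : Rg F) := by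
      refine prodEq (fun i => ?_) (fun j => ?_)
      · simp [hmS_def, va, vb]
      · simp only [hmS_def, Prod.smul_snd, Prod.snd_add, Prod.snd_mul, Pi.add_apply,
          Pi.smul_apply, Pi.mul_apply, va, vb, ite_mul, one_mul, zero_mul]
        by_cases hj : j = jj
        · simp only [hj, eq_self_iff_true, if_true]
          rw [matcomb hxy T, smul_smul, inv_mul_cancel₀ h2, one_smul]
        · simp [hj]
    rwa [heq] at hmem
  -- all vectors in the matrix block
  have hmat : ∀ M : Fin 2 → Matrix (Fin 2) (Fin 2) F, ((0, M) : Rg F) ∈ S := by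
    intro M
    have hrep : ((0, M) : Rg F) =
        ((0, fun j' => if j' = (0 : Fin 2) then M 0 else 0) : Rg F)
          + ((0, fun j' => if j' = (1 : Fin 2) then M 1 else 0) : Rg F) := by
      refine prodEq (fun i => ?_) (fun j => ?_)
      · simp
      · fin_cases j <;> simp
    rw [hrep]
    exact S.add_mem (hatom 0 (M 0)) (hatom 1 (M 1))
  obtain ⟨f, M⟩ := z
  have hz : ((f, M) : Rg F) = ((f, 0) : Rg F) + ((0, M) : Rg F) := by
    refine prodEq (fun i => ?_) (fun j => ?_) <;> simp
  rw [hz]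
  exact S.add_mem (hfun f) (hmat M)

variable (x y) in
noncomputable def phi (hxy : x ^ 2 + y ^ 2 = -1) : MonoidAlgebra F G →ₐ[F] Rg F :=
  MonoidAlgebra.lift F (Rg F) G (pihom x y hxy)

lemma phi_surj (h2 : (2 : F) ≠ 0) (hxy : x ^ 2 + y ^ 2 = -1) :
    Function.Surjective (phi x y hxy) := by
  intro z
  have hz := mem_top h2 hxy (phi x y hxy).range
    ⟨MonoidAlgebra.of F G a, by
      show phi x y hxy (MonoidAlgebra.of F G a) = va x y
      rw [phi, MonoidAlgebra.lift_of]; exact pihom_a hxy⟩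
    ⟨MonoidAlgebra.of F G b, by
      show phi x y hxy (MonoidAlgebra.of F G b) = vb
      rw [phi, MonoidAlgebra.lift_of]; exact pihom_b hxy⟩
    ⟨MonoidAlgebra.of F G c, by
      show phi x y hxy (MonoidAlgebra.of F G c) = vc
      rw [phi, MonoidAlgebra.lift_of]; exact pihom_c hxy⟩
    z
  exact hz

end Span

end H6


/-- Wedderburn decomposition of `𝔽_q H₆`, `q` an odd prime power. -/
theorem stmt_12 (ℓ m q : ℕ) [Fact ℓ.Prime] (hm : 0 < m) (hq : q = ℓ ^ m) (hodd : Odd q) :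
    Nonempty (MonoidAlgebra (GaloisField ℓ m) (PresentedGroup H6Rels) ≃+*
      ((Fin 8 → GaloisField ℓ m) ×
        (Fin 2 → Matrix (Fin 2) (Fin 2) (GaloisField ℓ m)))) := by
  classical
  set F := GaloisField ℓ m with hF
  have hl2 : ℓ ≠ 2 := by
    rintro rfl
    have : Even q := by
      subst hq
      exact (Nat.even_pow).mpr ⟨even_two, hm.ne'⟩
    exact (Nat.not_odd_iff_even.mpr this) hodd
  haveI : NeZero ℓ := ⟨(Fact.out : ℓ.Prime).pos.ne'⟩
  have h2 : (2 : F) ≠ 0 := by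
    intro h
    have hdvd : ℓ ∣ 2 := (CharP.cast_eq_zero_iff F ℓ 2).mp (by exact_mod_cast h)
    exact hl2 ((Nat.prime_dvd_prime_iff_eq (Fact.out : ℓ.Prime) Nat.prime_two).mp hdvd)
  obtain ⟨ax, ay, hxy0⟩ := CharP.sq_add_sq F ℓ (-1)
  set x : F := (ax : F)
  set y : F := (ay : F)
  have hxy : x ^ 2 + y ^ 2 = -1 := by
    rw [hxy0]
    push_cast
    ring
  haveI : Finite H6.G := H6.finiteG
  haveI : Fintype H6.G := Fintype.ofFinite H6.G
  haveI : Module.Finite F (MonoidAlgebra F H6.G) :=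
    Module.Finite.equiv ((MonoidAlgebra.coeffLinearEquiv F).trans (Finsupp.linearEquivFunOnFinite F F H6.G)).symm
  set φ := H6.phi x y hxy with hphi
  have hsurj : Function.Surjective φ := H6.phi_surj h2 hxy
  have hle : Module.finrank F (MonoidAlgebra F H6.G) ≤ 16 := by
    have e : MonoidAlgebra F H6.G ≃ₗ[F] (H6.G → F) :=
      (MonoidAlgebra.coeffLinearEquiv F).trans (Finsupp.linearEquivFunOnFinite F F H6.G)
    rw [e.finrank_eq, Module.finrank_pi, ← Nat.card_eq_fintype_card]
    exact H6.cardG_le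
  have h16 : Module.finrank F (H6.Rg F) = 16 := by
    rw [Module.finrank_prod, Module.finrank_pi, Module.finrank_pi_fintype]
    simp [Module.finrank_matrix]
  have hrange : LinearMap.range φ.toLinearMap = ⊤ := LinearMap.range_eq_top.mpr hsurj
  have hrn := LinearMap.finrank_range_add_finrank_ker φ.toLinearMap
  rw [hrange, finrank_top] at hrn
  have hker0 : Module.finrank F (LinearMap.ker φ.toLinearMap) = 0 := by omega
  have hker : LinearMap.ker φ.toLinearMap = ⊥ := Submodule.finrank_eq_zero.mp hker0
  have hinj : Function.Injective φ := by
    have h := LinearMap.ker_eq_bot.mp hker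
    simpa using h
  exact ⟨(AlgEquiv.ofBijective φ ⟨hinj, hsurj⟩).toRingEquiv⟩
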